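/- arXiv:2602.00177 — 2 statements merged into one kernel-verified Lean document; each statement's English description precedes it below -/
import Mathlib

section
/- Let Ω ⊆ ℂⁿ be a convex Reinhardt domain, let h and g be holomorphic on Ω, and suppose there is γ ∈ ℝ such that Re(e^{iγ}·∂h/∂z_j(z)) > |∂g/∂z_j(z)| for all z ∈ Ω and all j = 1,…,n. Then the pluriharmonic mapping f = h + conj∘g separates all pairs of points whose difference has nonnegative real coordinates: for all z, w ∈ Ω with z ≠ w such that w_j − z_j is a nonnegative real number for every j = 1,…,n, one has f(z) ≠ f(w). (This is the injectivity estimate established in the proof of Theorem 2.1.) -/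
open Complex Finset

noncomputable def pder {n : ℕ} (f : (Fin n → ℂ) → ℂ) (z : Fin n → ℂ) (j : Fin n) : ℂ :=
  fderiv ℂ f z (Pi.single j 1)

noncomputable def pder2 {n : ℕ} (f : (Fin n → ℂ) → ℂ) (z : Fin n → ℂ) (j k : Fin n) : ℂ :=
  fderiv ℂ (fun w => pder f w k) z (Pi.single j 1)

def polydisk (n : ℕ) : Set (Fin n → ℂ) := {z | ∀ j, ‖z j‖ < 1}

/-- The class `𝓑_n(M)` of normalized holomorphic functions on the unit polydisk. -/
def memB (n : ℕ) (M : ℝ) (f : (Fin n → ℂ) → ℂ) : Prop :=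
  (∀ z ∈ polydisk n, DifferentiableAt ℂ f z) ∧ f 0 = 0 ∧
    (∀ j : Fin n, pder f 0 j = 1) ∧
    ∀ z ∈ polydisk n, ∑ l, ∑ j, ∑ k, ‖z l * pder2 f z j k‖ ≤ M

/-- The class `𝓑_{H_n^0}(M)` of normalized pluriharmonic mappings `f = h + conj ∘ g`. -/
def memBH (n : ℕ) (M : ℝ) (h g : (Fin n → ℂ) → ℂ) : Prop :=
  (∀ z ∈ polydisk n, DifferentiableAt ℂ h z) ∧ (∀ z ∈ polydisk n, DifferentiableAt ℂ g z) ∧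
    h 0 = 0 ∧ g 0 = 0 ∧ (∀ j : Fin n, pder h 0 j = 1) ∧ (∀ j : Fin n, pder g 0 j = 0) ∧
    ∀ z ∈ polydisk n, ∑ l, ∑ j, ∑ k,
      (‖z l * pder2 h z j k‖ + ‖z l * pder2 g z j k‖) ≤ M

lemma clm_apply_eq_sum {n : ℕ} (L : (Fin n → ℂ) →L[ℂ] ℂ) (u : Fin n → ℂ) :
    L u = ∑ j, u j * L (Pi.single j 1) := by
  conv_lhs => rw [← Finset.univ_sum_single u]
  rw [map_sum]
  refine Finset.sum_congr rfl fun j _ => ?_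
  have h1 : Pi.single j (u j) = u j • (Pi.single j 1 : Fin n → ℂ) := by
    rw [← Pi.single_smul, smul_eq_mul, mul_one]
  rw [h1, map_smul, smul_eq_mul]

lemma fderiv_apply_eq_sum {n : ℕ} (f : (Fin n → ℂ) → ℂ) (p u : Fin n → ℂ) :
    fderiv ℂ f p u = ∑ j, u j * pder f p j :=
  clm_apply_eq_sum _ u

lemma key_deriv {n : ℕ} {Ω : Set (Fin n → ℂ)}
    (h g : (Fin n → ℂ) → ℂ)
    (hh : ∀ z ∈ Ω, DifferentiableAt ℂ h z) (hg : ∀ z ∈ Ω, DifferentiableAt ℂ g z)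
    (e : ℂ) (z u : Fin n → ℂ) (t : ℝ) (hmem : z + t • u ∈ Ω) :
    HasDerivAt (fun s : ℝ => (e * (h (z + s • u) + (starRingEnd ℂ) (g (z + s • u)))).re)
      ((e * ((∑ j, u j * pder h (z + t • u) j) +
        (starRingEnd ℂ) (∑ j, u j * pder g (z + t • u) j))).re) t := by
  set p : ℝ → (Fin n → ℂ) := fun s => z + s • u with hp
  have hpath : HasDerivAt p u t := by
    have h0 := ((hasDerivAt_id t).smul_const u).const_add z
    rw [one_smul] at h0
    exact h0
  have hhd : HasDerivAt (fun s => h (p s)) (fderiv ℂ h (p t) u) t :=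
    by have := (((hh _ hmem).hasFDerivAt.restrictScalars ℝ).comp_hasDerivAt t hpath); exact this
  have hgd : HasDerivAt (fun s => g (p s)) (fderiv ℂ g (p t) u) t :=
    by have := (((hg _ hmem).hasFDerivAt.restrictScalars ℝ).comp_hasDerivAt t hpath); exact this
  have hgc : HasDerivAt (fun s => (starRingEnd ℂ) (g (p s)))
      ((starRingEnd ℂ) (fderiv ℂ g (p t) u)) t := hgd.star
  have hsum := (hhd.add hgc).const_mul e
  have hre := Complex.reCLM.hasFDerivAt.comp_hasDerivAt t hsum
  rw [fderiv_apply_eq_sum h, fderiv_apply_eq_sum g] at hre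
  exact hre


/-- injectivity estimate from the proof of Theorem 2.1 (pluriharmonic
Noshiro–Warschawski criterion on convex Reinhardt domains). -/
theorem stmt_2 {n : ℕ} (Ω : Set (Fin n → ℂ)) (hΩ : IsOpen Ω) (hconv : Convex ℝ Ω)
    (hRein : ∀ z ∈ Ω, ∀ θ : Fin n → ℝ,
      (fun j => Complex.exp ((θ j : ℂ) * Complex.I) * z j) ∈ Ω)
    (h g : (Fin n → ℂ) → ℂ)
    (hh : ∀ z ∈ Ω, DifferentiableAt ℂ h z) (hg : ∀ z ∈ Ω, DifferentiableAt ℂ g z)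
    (γ : ℝ)
    (hineq : ∀ z ∈ Ω, ∀ j : Fin n,
      ‖pder g z j‖ < (Complex.exp ((γ : ℂ) * Complex.I) * pder h z j).re) :
    ∀ z ∈ Ω, ∀ w ∈ Ω, z ≠ w → (∀ j : Fin n, ∃ r : ℝ, 0 ≤ r ∧ w j - z j = (r : ℂ)) →
      h z + starRingEnd ℂ (g z) ≠ h w + starRingEnd ℂ (g w) := by
  intro z hz w hw hzw hray heq
  choose r hr0 hru using hray
  set e : ℂ := Complex.exp ((γ : ℂ) * Complex.I) with he
  set u : Fin n → ℂ := fun j => (r j : ℂ) with hu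
  -- path membership
  have hpmem : ∀ t ∈ Set.Icc (0:ℝ) 1, z + t • u ∈ Ω := by
    intro t ht
    have : z + t • u = (1 - t) • z + t • w := by
      funext j
      have := hru j
      simp only [Pi.add_apply, Pi.smul_apply, smul_eq_mul, hu, Complex.real_smul]
      push_cast
      rw [← this]
      ring
    rw [this]
    exact hconv hz hw (by linarith [ht.2]) ht.1 (by ring)
  -- the auxiliary real function
  set ψ : ℝ → ℝ :=
    fun s => (e * (h (z + s • u) + (starRingEnd ℂ) (g (z + s • u)))).re with hψ
  -- derivative value
  set D : ℝ → ℝ := fun t => ((e * ((∑ j, u j * pder h (z + t • u) j) +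
        (starRingEnd ℂ) (∑ j, u j * pder g (z + t • u) j))).re) with hD
  have hder : ∀ t ∈ Set.Icc (0:ℝ) 1, HasDerivAt ψ (D t) t :=
    fun t ht => key_deriv h g hh hg e z u t (hpmem t ht)
  -- positivity of D on Icc
  have hDpos : ∀ t ∈ Set.Icc (0:ℝ) 1, 0 < D t := by
    intro t ht
    have hmem := hpmem t ht
    set p := z + t • u with hp
    have hconj : (starRingEnd ℂ) (∑ j, u j * pder g p j)
        = ∑ j, u j * (starRingEnd ℂ) (pder g p j) := by
      rw [map_sum]
      refine Finset.sum_congr rfl fun j _ => ?_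
      rw [map_mul, hu, Complex.conj_ofReal]
    have hsplit : e * ((∑ j, u j * pder h p j) +
        (starRingEnd ℂ) (∑ j, u j * pder g p j))
        = ∑ j, (u j) * (e * (pder h p j + (starRingEnd ℂ) (pder g p j))) := by
      rw [hconj, ← Finset.sum_add_distrib, Finset.mul_sum]
      refine Finset.sum_congr rfl fun j _ => ?_
      ring
    have hterm : ∀ j : Fin n,
        0 < (e * (pder h p j + (starRingEnd ℂ) (pder g p j))).re := by
      intro j
      have h1 := hineq p hmem j
      have h2 : ‖e * (starRingEnd ℂ) (pder g p j)‖ = ‖pder g p j‖ := by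
        rw [norm_mul, Complex.norm_conj, he, Complex.norm_exp_ofReal_mul_I, one_mul]
      have h3 : -(‖pder g p j‖) ≤ (e * (starRingEnd ℂ) (pder g p j)).re := by
        have h4 := Complex.abs_re_le_norm (e * (starRingEnd ℂ) (pder g p j))
        rw [h2] at h4
        have h5 := neg_abs_le ((e * (starRingEnd ℂ) (pder g p j)).re)
        have h6 := abs_le.mp h4
        linarith [h6.1]
      rw [mul_add, Complex.add_re]
      linarith
    show 0 < (e * ((∑ j, u j * pder h p j) +
        (starRingEnd ℂ) (∑ j, u j * pder g p j))).re
    rw [hsplit, Complex.re_sum]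
    apply Finset.sum_pos'
    · intro j _
      simp only [hu, Complex.re_ofReal_mul]
      exact mul_nonneg (hr0 j) (hterm j).le
    · obtain ⟨j0, hj0⟩ : ∃ j, z j ≠ w j := by
        by_contra hc
        push_neg at hc
        exact hzw (funext hc)
      refine ⟨j0, Finset.mem_univ j0, ?_⟩
      simp only [hu, Complex.re_ofReal_mul]
      have hrj : 0 < r j0 := by
        rcases lt_or_eq_of_le (hr0 j0) with hlt | heq0
        · exact hlt
        · exfalso
          apply hj0
          have := hru j0
          rw [← heq0] at this
          have : w j0 - z j0 = 0 := by simpa using this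
          linear_combination -this
      exact mul_pos hrj (hterm j0)
  -- strict monotonicity
  have hcont : ContinuousOn ψ (Set.Icc 0 1) :=
    fun t ht => ((hder t ht).continuousAt).continuousWithinAt
  have hmono : StrictMonoOn ψ (Set.Icc (0:ℝ) 1) := by
    apply strictMonoOn_of_deriv_pos (convex_Icc 0 1) hcont
    intro t ht
    rw [interior_Icc] at ht
    have ht' : t ∈ Set.Icc (0:ℝ) 1 := ⟨ht.1.le, ht.2.le⟩
    rw [(hder t ht').deriv]
    exact hDpos t ht'
  have h01 : ψ 0 < ψ 1 :=
    hmono (Set.left_mem_Icc.mpr zero_le_one) (Set.right_mem_Icc.mpr zero_le_one) zero_lt_one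
  have hp0 : z + (0:ℝ) • u = z := by simp
  have hp1 : z + (1:ℝ) • u = w := by
    funext j
    simp only [Pi.add_apply, Pi.smul_apply, one_smul, hu]
    rw [← hru j]
    ring
  have : ψ 0 = ψ 1 := by
    rw [hψ]
    simp only [hp0, hp1, heq]
  linarith
end

section
/- Let 0 < M ≤ 1 and let f ∈ 𝓑_n(M). Then ∂f/∂z_k(z) ≠ 0 for every z ∈ 𝔻ⁿ and every k = 1,…,n. (Non-vanishing of the partial derivatives established in Theorem 2.4.) -/
set_option maxHeartbeats 1000000
set_option synthInstance.maxHeartbeats 400000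


open Complex Finset

section Aux
open Metric Set intervalIntegral
variable {n : ℕ}

lemma polydisk_eq (n : ℕ) : polydisk n = Metric.ball (0 : Fin n → ℂ) 1 := by
  ext z
  simp only [polydisk, Set.mem_setOf_eq, mem_ball, dist_zero_right]
  rw [pi_norm_lt_iff one_pos]

lemma apply_eq_sum (L : (Fin n → ℂ) →L[ℂ] ℂ) (z : Fin n → ℂ) :
    L z = ∑ j, z j * L (Pi.single j 1) := by
  have hz : z = ∑ j, z j • (Pi.single j (1:ℂ) : Fin n → ℂ) := by
    funext i
    simp [Finset.sum_apply, Pi.single_apply]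
  conv_lhs => rw [hz]
  rw [map_sum]
  simp [smul_eq_mul]

lemma opnorm_le_sum (L : (Fin n → ℂ) →L[ℂ] ℂ) :
    ‖L‖ ≤ ∑ j, ‖L (Pi.single j 1)‖ := by
  refine L.opNorm_le_bound (by positivity) fun z => ?_
  rw [apply_eq_sum L z, Finset.sum_mul]
  refine (norm_sum_le _ _).trans (Finset.sum_le_sum fun j _ => ?_)
  rw [norm_mul, mul_comm (‖L (Pi.single j 1)‖)]
  exact mul_le_mul_of_nonneg_right (norm_le_pi_norm z j) (norm_nonneg _)

lemma norm_single_le (j : Fin n) : ‖(Pi.single j (1:ℂ) : Fin n → ℂ)‖ ≤ 1 := by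
  refine (pi_norm_le_iff_of_nonneg zero_le_one).2 fun i => ?_
  rcases eq_or_ne i j with rfl | h
  · simp
  · simp [Pi.single_apply, h]

lemma line_hasDerivAt {f : (Fin n → ℂ) → ℂ} {w v : Fin n → ℂ} {u : ℂ}
    (hf : DifferentiableAt ℂ f (w + u • v)) :
    HasDerivAt (fun u : ℂ => f (w + u • v)) (fderiv ℂ f (w + u • v) v) u := by
  have h1 : HasDerivAt (fun u : ℂ => w + u • v) v u := by
    simpa using ((hasDerivAt_id u).smul_const v).const_add w
  exact hf.hasFDerivAt.comp_hasDerivAt u h1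

lemma pder_diff {f : (Fin n → ℂ) → ℂ} {U : Set (Fin n → ℂ)} (hU : IsOpen U)
    (hf : ∀ w ∈ U, DifferentiableAt ℂ f w) (k : Fin n) {w₀ : Fin n → ℂ} (hw₀ : w₀ ∈ U) :
    DifferentiableAt ℂ (fun w => pder f w k) w₀ := by
  have hcont : ContinuousOn f U := fun x hx => (hf x hx).continuousAt.continuousWithinAt
  -- choose a radius
  obtain ⟨ε, hε, hεU⟩ := Metric.isOpen_iff.1 hU w₀ hw₀
  set δ : ℝ := ε / 4 with hδ_def
  have hδ : 0 < δ := by positivity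
  have hsub : closedBall w₀ (3*δ) ⊆ U := by
    refine subset_trans (closedBall_subset_ball ?_) hεU
    rw [hδ_def]; linarith
  -- a bound for f
  obtain ⟨C₀, hC₀⟩ := (isCompact_closedBall w₀ (3*δ)).exists_bound_of_continuousOn
    (hcont.mono hsub)
  set C : ℝ := max C₀ 0 with hC_def
  have hC : ∀ x ∈ closedBall w₀ (3*δ), ‖f x‖ ≤ C := fun x hx => (hC₀ x hx).trans (le_max_left _ _)
  have hCpos : 0 ≤ C := le_max_right _ _
  -- a bound for fderiv f
  set B : ℝ := n * ((2*C+1)/δ) with hB_def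
  have hB : ∀ v ∈ closedBall w₀ (2*δ), ‖fderiv ℂ f v‖ ≤ B := by
    intro v hv
    have hmemv : ∀ u : ℂ, ‖u‖ ≤ δ → ∀ j : Fin n,
        v + u • (Pi.single j 1 : Fin n → ℂ) ∈ closedBall w₀ (3*δ) := by
      intro u hu j
      rw [mem_closedBall] at hv ⊢
      calc dist (v + u • (Pi.single j 1 : Fin n → ℂ)) w₀
          ≤ dist (v + u • (Pi.single j 1 : Fin n → ℂ)) v + dist v w₀ := dist_triangle _ _ _
        _ ≤ δ + 2*δ := by
            refine add_le_add ?_ hv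
            rw [dist_eq_norm, add_sub_cancel_left, norm_smul]
            calc ‖u‖ * ‖(Pi.single j 1 : Fin n → ℂ)‖ ≤ δ * 1 :=
                mul_le_mul hu (norm_single_le j) (norm_nonneg _) hδ.le
            _ = δ := by ring
        _ = 3*δ := by ring
    refine (opnorm_le_sum _).trans ?_
    have hterm : ∀ j : Fin n, ‖fderiv ℂ f v (Pi.single j 1)‖ ≤ (2*C+1)/δ := by
      intro j
      set g : ℂ → ℂ := fun u => f (v + u • (Pi.single j 1 : Fin n → ℂ)) with hg_def
      have hgd : DifferentiableOn ℂ g (ball 0 δ) := by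
        intro u hu
        rw [mem_ball, dist_zero_right] at hu
        exact ((line_hasDerivAt (hf _ (hsub (hmemv u hu.le j)))).differentiableAt).differentiableWithinAt
      have hmaps : MapsTo g (ball 0 δ) (ball (g 0) (2*C+1)) := by
        intro u hu
        rw [mem_ball, dist_zero_right] at hu
        rw [mem_ball]
        calc dist (g u) (g 0) ≤ ‖g u‖ + ‖g 0‖ := dist_le_norm_add_norm _ _
          _ ≤ C + C := add_le_add (hC _ (hmemv u hu.le j))
              (hC _ (by simpa using hmemv 0 (by simp [hδ.le]) j))
          _ < 2*C+1 := by linarith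
      have hderiv : deriv g 0 = fderiv ℂ f v (Pi.single j 1) := by
        have h0 : DifferentiableAt ℂ f (v + (0:ℂ) • (Pi.single j 1 : Fin n → ℂ)) :=
          hf _ (hsub (hmemv 0 (by simp [hδ.le]) j))
        rw [(line_hasDerivAt h0).deriv]
        simp
      rw [← hderiv]
      exact Complex.norm_deriv_le_div_of_mapsTo_ball hgd (hmaps.mono_right ball_subset_closedBall) hδ
    calc ∑ j, ‖fderiv ℂ f v (Pi.single j 1)‖ ≤ ∑ _j : Fin n, (2*C+1)/δ :=
          Finset.sum_le_sum fun j _ => hterm j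
      _ = B := by rw [Finset.sum_const, card_univ, Fintype.card_fin, nsmul_eq_mul, hB_def]
  set ek : Fin n → ℂ := Pi.single k 1 with hek_def
  have hek : ‖ek‖ ≤ 1 := norm_single_le k
  -- Cauchy integral representation of `pder f w k` for `w` near `w₀`
  have key : ∀ w ∈ closedBall w₀ δ, pder f w k = (2 * Real.pi * I : ℂ)⁻¹ •
      (∮ z in C(0, δ), z⁻¹ • z⁻¹ • f (w + z • ek)) := by
    intro w hw
    have hmem : ∀ u : ℂ, ‖u‖ ≤ 2*δ → w + u • ek ∈ U := by
      intro u hu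
      apply hsub
      rw [mem_closedBall] at hw ⊢
      calc dist (w + u • ek) w₀ ≤ dist (w + u • ek) w + dist w w₀ := dist_triangle _ _ _
      _ ≤ 2*δ + δ := by
          refine add_le_add ?_ hw
          rw [dist_eq_norm, add_sub_cancel_left, norm_smul]
          calc ‖u‖ * ‖ek‖ ≤ (2*δ) * 1 := mul_le_mul hu hek (norm_nonneg _) (by positivity)
          _ = 2*δ := by ring
      _ ≤ 3*δ := by linarith
    have hg : DifferentiableOn ℂ (fun u : ℂ => f (w + u • ek))
        (closedBall (0:ℂ) (⟨δ, hδ.le⟩ : NNReal)) := by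
      intro u hu
      have : DifferentiableAt ℂ (fun u : ℂ => f (w + u • ek)) u := by
        have := line_hasDerivAt (f := f) (w := w) (v := ek) (u := u)
          (hf _ (hmem u (by
            rw [mem_closedBall, dist_zero_right] at hu
            simpa using hu.trans (by push_cast; linarith))))
        exact this.differentiableAt
      exact this.differentiableWithinAt
    have hps := hg.hasFPowerSeriesOnBall (by exact_mod_cast hδ)
    have hder : deriv (fun u : ℂ => f (w + u • ek)) 0 = pder f w k := by
      have h0 : DifferentiableAt ℂ f (w + (0:ℂ) • ek) :=
        hf _ (hmem 0 (by simp; positivity))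
      have := (line_hasDerivAt (f := f) (w := w) (v := ek) (u := 0) h0).deriv
      rw [this]
      simp [pder, hek_def]
    have hcoeff := hps.hasFPowerSeriesAt.deriv
    rw [hder] at hcoeff
    rw [hcoeff, cauchyPowerSeries_apply]
    simp [sub_zero, pow_one, one_div]
    rfl
  -- differentiability of the integral representation
  have hdiff : DifferentiableAt ℂ (fun w => (2 * Real.pi * I : ℂ)⁻¹ •
      (∮ z in C(0, δ), z⁻¹ • z⁻¹ • f (w + z • ek))) w₀ := by
    set a : ℝ → ℂ := fun θ => deriv (circleMap 0 δ) θ * ((circleMap 0 δ θ)⁻¹ * (circleMap 0 δ θ)⁻¹)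
      with ha_def
    have hcm_ne : ∀ θ, circleMap 0 δ θ ≠ 0 := fun θ => circleMap_ne_center hδ.ne'
    have ha_abs : ∀ θ, ‖a θ‖ = δ⁻¹ := by
      intro θ
      have h1 : ‖circleMap 0 δ θ‖ = δ := by rw [norm_circleMap_zero, abs_of_pos hδ]
      simp only [ha_def, deriv_circleMap, norm_mul, norm_inv, map_mul, h1,
        Complex.norm_I]
      field_simp
    have ha_cont : Continuous a := by
      simp only [ha_def, deriv_circleMap]
      exact ((continuous_circleMap 0 δ).mul continuous_const).mul
        (((continuous_circleMap 0 δ).inv₀ hcm_ne).mul ((continuous_circleMap 0 δ).inv₀ hcm_ne))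
    have hmem : ∀ w ∈ closedBall w₀ δ, ∀ θ : ℝ, w + circleMap 0 δ θ • ek ∈ closedBall w₀ (2*δ) := by
      intro w hw θ
      rw [mem_closedBall] at hw ⊢
      calc dist (w + circleMap 0 δ θ • ek) w₀
          ≤ dist (w + circleMap 0 δ θ • ek) w + dist w w₀ := dist_triangle _ _ _
        _ ≤ δ + δ := by
            refine add_le_add ?_ hw
            rw [dist_eq_norm, add_sub_cancel_left, norm_smul]
            calc ‖circleMap 0 δ θ‖ * ‖ek‖ ≤ δ * 1 := by
                  refine mul_le_mul ?_ hek (norm_nonneg _) hδ.le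
                  rw [norm_circleMap_zero, abs_of_pos hδ]
            _ = δ := by ring
        _ = 2*δ := by ring
    have hUmem : ∀ w ∈ closedBall w₀ δ, ∀ θ : ℝ, w + circleMap 0 δ θ • ek ∈ U := by
      intro w hw θ
      exact hsub (closedBall_subset_closedBall (by linarith) (hmem w hw θ))
    have key2 : HasFDerivAt (fun w => ∫ θ in (0:ℝ)..(2*Real.pi), a θ • f (w + circleMap 0 δ θ • ek))
        (∫ θ in (0:ℝ)..(2*Real.pi), a θ • fderiv ℂ f (w₀ + circleMap 0 δ θ • ek)) w₀ := by
      apply intervalIntegral.hasFDerivAt_integral_of_dominated_of_fderiv_le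
        (F' := fun w θ => a θ • fderiv ℂ f (w + circleMap 0 δ θ • ek))
        (bound := fun _ => δ⁻¹ * B) (s := ball w₀ δ) (ball_mem_nhds w₀ hδ)
      · filter_upwards [Metric.closedBall_mem_nhds w₀ hδ] with w hw
        refine Continuous.aestronglyMeasurable ?_
        refine ha_cont.smul ?_
        refine (hcont.comp_continuous ?_ (fun θ => hUmem w hw θ))
        exact continuous_const.add ((continuous_circleMap 0 δ).smul continuous_const)
      · have hc : Continuous (fun θ => a θ • f (w₀ + circleMap 0 δ θ • ek)) := by
          refine ha_cont.smul ?_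
          refine (hcont.comp_continuous ?_ (fun θ => hUmem w₀ (mem_closedBall_self hδ.le) θ))
          exact continuous_const.add ((continuous_circleMap 0 δ).smul continuous_const)
        exact hc.intervalIntegrable _ _
      · have hm : Measurable (fun θ => fderiv ℂ f (w₀ + circleMap 0 δ θ • ek)) :=
          (measurable_fderiv ℂ f).comp
            (measurable_const.add ((continuous_circleMap 0 δ).measurable.smul measurable_const))
        exact (ha_cont.aestronglyMeasurable.smul hm.stronglyMeasurable.aestronglyMeasurable)
      · refine Filter.Eventually.of_forall fun θ _ => fun w hw => ?_
        rw [norm_smul (a θ) (fderiv ℂ f (w + circleMap 0 δ θ • ek)), ha_abs]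
        exact mul_le_mul_of_nonneg_left
          (hB _ (hmem w (ball_subset_closedBall hw) θ)) (by positivity)
      · exact intervalIntegrable_const
      · refine Filter.Eventually.of_forall fun θ _ => fun w hw => ?_
        have hfd : HasFDerivAt f (fderiv ℂ f (w + circleMap 0 δ θ • ek))
            (w + circleMap 0 δ θ • ek) :=
          (hf _ (hUmem w (ball_subset_closedBall hw) θ)).hasFDerivAt
        have htr : HasFDerivAt (fun w : Fin n → ℂ => w + circleMap 0 δ θ • ek)
            (ContinuousLinearMap.id ℂ (Fin n → ℂ)) w := (hasFDerivAt_id w).add_const _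
        have := (hfd.comp w htr).const_smul (a θ)
        exact this
    have heq : ∀ w, (2 * Real.pi * I : ℂ)⁻¹ • (∮ z in C(0, δ), z⁻¹ • z⁻¹ • f (w + z • ek))
        = (2 * Real.pi * I : ℂ)⁻¹ •
          ∫ θ in (0:ℝ)..(2*Real.pi), a θ • f (w + circleMap 0 δ θ • ek) := by
      intro w
      congr 1
      rw [circleIntegral]
      congr 1
      funext θ
      simp only [ha_def, smul_eq_mul]
      ring
    have : DifferentiableAt ℂ
        (fun w => (2 * Real.pi * I : ℂ)⁻¹ •
          ∫ θ in (0:ℝ)..(2*Real.pi), a θ • f (w + circleMap 0 δ θ • ek)) w₀ :=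
      (key2.differentiableAt.const_smul ((2 * Real.pi * I : ℂ)⁻¹) :)
    exact this.congr_of_eventuallyEq (Filter.Eventually.of_forall fun w => (heq w))
  refine hdiff.congr_of_eventuallyEq ?_
  filter_upwards [Metric.closedBall_mem_nhds w₀ hδ] with w hw
  exact key w hw
end Aux

open Metric Set

/-- for `0 < M ≤ 1`, the partial derivatives of `f ∈ 𝓑_n(M)` never vanish
on the unit polydisk (Theorem 2.4). -/
theorem stmt_7 {n : ℕ} (M : ℝ) (hM0 : 0 < M) (hM1 : M ≤ 1)
    (f : (Fin n → ℂ) → ℂ) (hf : memB n M f) :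
    ∀ z ∈ polydisk n, ∀ k : Fin n, pder f z k ≠ 0 := by
  obtain ⟨hdiff, hf0, hpd0, hbound⟩ := hf
  intro z hz k
  by_cases hz0 : z = 0
  · rw [hz0, hpd0 k]; exact one_ne_zero
  have hUopen : IsOpen (polydisk n) := by rw [polydisk_eq]; exact Metric.isOpen_ball
  set r : ℝ := ‖z‖ with hr_def
  have hr0 : 0 < r := norm_pos_iff.2 hz0
  have hr1 : r < 1 := by
    rw [polydisk_eq] at hz
    simpa [mem_ball_zero_iff] using hz
  set R : ℝ := r⁻¹ with hR_def
  have hR0 : 0 < R := by positivity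
  have hR1 : 1 < R := by
    rw [hR_def]
    exact (one_lt_inv₀ hr0).mpr hr1
  have hmemP : ∀ s : ℂ, ‖s‖ < R → s • z ∈ polydisk n := by
    intro s hs
    rw [polydisk_eq, mem_ball_zero_iff, norm_smul]
    calc ‖s‖ * ‖z‖ < R * r := by
          exact mul_lt_mul_of_pos_right hs hr0
    _ = 1 := inv_mul_cancel₀ hr0.ne'
  have hP : ∀ w ∈ polydisk n, DifferentiableAt ℂ (fun w => pder f w k) w :=
    fun w hw => pder_diff hUopen hdiff k hw
  set φ : ℂ → ℂ := fun s => pder f (s • z) k with hφ_def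
  have hφd : ∀ s ∈ Metric.ball (0:ℂ) R,
      HasDerivAt φ (fderiv ℂ (fun w => pder f w k) (s • z) z) s := by
    intro s hs
    rw [mem_ball_zero_iff] at hs
    have h1 : HasDerivAt (fun s : ℂ => s • z) z s := by
      simpa using (hasDerivAt_id s).smul_const z
    exact (hP _ (hmemP s hs)).hasFDerivAt.comp_hasDerivAt s h1
  have hφdiff : DifferentiableOn ℂ φ (Metric.ball 0 R) :=
    fun s hs => (hφd s hs).differentiableAt.differentiableWithinAt
  have hDdiff : DifferentiableOn ℂ (deriv φ) (Metric.ball 0 R) :=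
    ((hφdiff.analyticOnNhd Metric.isOpen_ball).deriv).differentiableOn
  have hDval : ∀ s ∈ Metric.ball (0:ℂ) R, deriv φ s = ∑ j, z j * pder2 f (s • z) j k := by
    intro s hs
    rw [(hφd s hs).deriv, apply_eq_sum]
    rfl
  set η : ℂ → ℂ := fun t => t * deriv φ t with hη_def
  have hηdiff : DifferentiableOn ℂ η (Metric.ball 0 R) :=
    (differentiable_id.differentiableOn).mul hDdiff
  have hη0 : η 0 = 0 := by simp [hη_def]
  have hηbound : ∀ t ∈ Metric.ball (0:ℂ) R, ‖η t‖ ≤ M := by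
    intro t ht
    have htR : ‖t‖ < R := mem_ball_zero_iff.1 ht
    have h1 : η t = ∑ j, ((t • z) j) * pder2 f (t • z) j k := by
      rw [hη_def]
      simp only []
      rw [hDval t ht, Finset.mul_sum]
      refine Finset.sum_congr rfl fun j _ => ?_
      simp [Pi.smul_apply, smul_eq_mul]
      ring
    rw [h1]
    calc ‖∑ j, ((t • z) j) * pder2 f (t • z) j k‖
        ≤ ∑ j, ‖((t • z) j) * pder2 f (t • z) j k‖ := by
          simpa using
            norm_sum_le Finset.univ (fun j => ((t • z) j) * pder2 f (t • z) j k)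
      _ ≤ ∑ l, ∑ j, ∑ k', ‖((t • z) l) * pder2 f (t • z) j k'‖ := by
          refine Finset.sum_le_sum fun l _ => ?_
          calc ‖((t • z) l) * pder2 f (t • z) l k‖
              ≤ ∑ k', ‖((t • z) l) * pder2 f (t • z) l k'‖ :=
                Finset.single_le_sum
                  (f := fun k' => ‖((t • z) l) * pder2 f (t • z) l k'‖)
                  (fun _ _ => norm_nonneg _) (Finset.mem_univ k)
            _ ≤ ∑ j, ∑ k', ‖((t • z) l) * pder2 f (t • z) j k'‖ :=
                Finset.single_le_sum
                  (f := fun j => ∑ k', ‖((t • z) l) * pder2 f (t • z) j k'‖)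
                  (fun _ _ => Finset.sum_nonneg fun _ _ => norm_nonneg _)
                  (Finset.mem_univ l)
      _ ≤ M := hbound _ (hmemP t htR)
  have hMr : ∀ t ∈ Metric.ball (0:ℂ) R, ‖η t‖ ≤ (M / R) * ‖t‖ := by
    intro t ht
    have hstep : ∀ ε : ℝ, 0 < ε → ‖η t‖ ≤ ((M + ε) / R) * ‖t‖ := by
      intro ε hε
      have hmaps : Set.MapsTo η (Metric.ball 0 R) (Metric.ball (η 0) (M + ε)) := by
        intro u hu
        rw [hη0, Metric.mem_ball, dist_zero_right]
        exact lt_of_le_of_lt (hηbound u hu) (by linarith)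
      have := Complex.dist_le_div_mul_dist_of_mapsTo_ball hηdiff (hmaps.mono_right ball_subset_closedBall) ht
      simpa [hη0, dist_zero_right] using this
    have hts : ‖t‖ ≤ R := le_of_lt (mem_ball_zero_iff.1 ht)
    refine le_of_forall_pos_le_add fun ε hε => ?_
    calc ‖η t‖ ≤ ((M + ε) / R) * ‖t‖ := hstep ε hε
      _ = (M / R) * ‖t‖ + (ε / R) * ‖t‖ := by ring
      _ ≤ (M / R) * ‖t‖ + ε := by
          have h2 : (ε / R) * ‖t‖ ≤ ε := by
            rw [div_mul_eq_mul_div, div_le_iff₀ hR0]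
            nlinarith [norm_nonneg t]
          linarith
  have hDb : ∀ t ∈ Metric.ball (0:ℂ) R, ‖deriv φ t‖ ≤ M / R := by
    have hne : ∀ t ∈ Metric.ball (0:ℂ) R, t ≠ 0 → ‖deriv φ t‖ ≤ M / R := by
      intro t ht ht0
      have h := hMr t ht
      rw [hη_def] at h
      simp only [norm_mul] at h
      have ht0' : 0 < ‖t‖ := norm_pos_iff.2 ht0
      have h' : ‖t‖ * ‖deriv φ t‖ ≤ ‖t‖ * (M / R) := h.trans_eq (mul_comm _ _)
      exact le_of_mul_le_mul_left h' ht0'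
    intro t ht
    rcases eq_or_ne t 0 with rfl | ht0
    · have hcont : ContinuousAt (fun u => ‖deriv φ u‖) 0 :=
        (continuous_norm.continuousAt).comp
          ((hDdiff.differentiableAt (Metric.isOpen_ball.mem_nhds ht)).continuousAt)
      refine le_of_tendsto (hcont.tendsto.mono_left nhdsWithin_le_nhds :
        Filter.Tendsto (fun u => ‖deriv φ u‖) (nhdsWithin (0:ℂ) {(0:ℂ)}ᶜ) _) ?_
      filter_upwards [self_mem_nhdsWithin,
        nhdsWithin_le_nhds (Metric.isOpen_ball.mem_nhds ht)] with u hu1 hu2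
      exact hne u hu2 hu1
    · exact hne t ht ht0
  have hconv : Convex ℝ (Metric.ball (0:ℂ) R) := convex_ball 0 R
  have hmem0 : (0:ℂ) ∈ Metric.ball (0:ℂ) R := by simp [hR0]
  have hmem1 : (1:ℂ) ∈ Metric.ball (0:ℂ) R := by
    rw [mem_ball_zero_iff]; simpa using hR1
  have hmv := hconv.norm_image_sub_le_of_norm_hasDerivWithin_le
    (f := φ) (f' := deriv φ)
    (fun x hx => by
      have h := hφd x hx
      exact (h.deriv ▸ h).hasDerivWithinAt)
    hDb hmem0 hmem1
  have hφ1 : φ 1 = pder f z k := by rw [hφ_def]; simp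
  have hφ0 : φ 0 = 1 := by rw [hφ_def]; simpa using hpd0 k
  rw [hφ1, hφ0] at hmv
  have hlt : M / R < 1 := by
    rw [hR_def, div_eq_mul_inv, inv_inv]
    calc M * r ≤ 1 * r := mul_le_mul_of_nonneg_right hM1 hr0.le
      _ = r := one_mul r
      _ < 1 := hr1
  intro hcontra
  rw [hcontra] at hmv
  simp only [zero_sub, norm_neg, norm_one, sub_zero, mul_one] at hmv
  linarith
end
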